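/- Let p ≥ 2 be a natural number. The function f : ℝ → ℝ defined by f(x) = ∫_0^x (1 - t^p)^(-(p-1)/p) dt is analytic at x = 0. -/

import Mathlib

open Real intervalIntegral

theorem arcsinp_integrand_analyticAt (p : ℕ) (hp : 2 ≤ p) :
    AnalyticAt ℝ (fun t : ℝ => (1 - t ^ p) ^ (-(((p:ℝ) - 1) / p))) 0 := by
  set r : ℝ := -(((p:ℝ) - 1) / p) with hr
  have hp0 : p ≠ 0 := by omega
  have hG : AnalyticAt ℂ (fun z : ℂ => (1 - z ^ p) ^ (r : ℂ)) 0 := by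
    apply AnalyticAt.cpow
    · exact analyticAt_const.sub (analyticAt_id.pow p)
    · exact analyticAt_const
    · simp [zero_pow hp0, Complex.slitPlane]
  have h1 : AnalyticAt ℝ (fun x : ℝ => (x:ℂ)) 0 := Complex.ofRealCLM.analyticAt 0
  have h2 : AnalyticAt ℝ (fun z : ℂ => (1 - z ^ p) ^ (r : ℂ)) (((0:ℝ):ℂ)) := by
    simpa using hG.restrictScalars (𝕜 := ℝ)
  have h3 : AnalyticAt ℝ (fun x : ℝ => (1 - (x:ℂ) ^ p) ^ (r:ℂ)) 0 := h2.comp h1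
  have hcomp : AnalyticAt ℝ (fun x : ℝ => ((1 - (x:ℂ) ^ p) ^ (r:ℂ)).re) 0 :=
    (Complex.reCLM.analyticAt _).comp h3
  apply hcomp.congr
  have : ∀ᶠ x : ℝ in nhds 0, |x| < 1 := by
    filter_upwards [Metric.ball_mem_nhds (0:ℝ) one_pos] with x hx
    simpa [Real.dist_eq] using hx
  filter_upwards [this] with x hx
  have hb : (0:ℝ) ≤ 1 - x ^ p := by
    have : |x| ^ p ≤ 1 := pow_le_one₀ (abs_nonneg _) hx.le
    have := (abs_pow x p ▸ (le_abs_self (x ^ p))).trans this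
    linarith
  rw [← Complex.ofReal_pow, ← Complex.ofReal_one, ← Complex.ofReal_sub,
    ← Complex.ofReal_cpow hb]
  simp

theorem analyticAt_primitive {g : ℝ → ℝ} (hg : AnalyticAt ℝ g 0) :
    AnalyticAt ℝ (fun x => ∫ t in (0:ℝ)..x, g t) 0 := by
  obtain ⟨q, ρ, hq⟩ := hg
  obtain ⟨ρ', hρ'0, hρ'⟩ : ∃ ρ' : NNReal, 0 < ρ' ∧ (ρ' : ENNReal) < ρ := by
    obtain ⟨ρ', h1, h2⟩ := ENNReal.lt_iff_exists_nnreal_btwn.mp hq.r_pos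
    exact ⟨ρ', by exact_mod_cast ENNReal.coe_pos.mp (by simpa using h1), h2⟩
  have hrad : (ρ' : ENNReal) < q.radius := lt_of_lt_of_le hρ' hq.r_le
  set a : ℕ → ℝ := fun n => q.coeff n with ha
  set b : ℕ → ℝ := fun n => match n with
    | 0 => 0
    | (m+1) => a m / ((m:ℝ)+1) with hb
  have hb0 : b 0 = 0 := rfl
  have hbs : ∀ m : ℕ, b (m+1) = a m / ((m:ℝ)+1) := fun m => rfl
  have hab : ∀ m : ℕ, |a m| ≤ ‖q m‖ := fun m => by
    rw [ha, ← Real.norm_eq_abs, FormalMultilinearSeries.norm_apply_eq_norm_coef]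
  have hbq : ∀ m : ℕ, |b (m+1)| ≤ ‖q m‖ := fun m => by
    rw [hbs, abs_div, abs_of_pos (by positivity : (0:ℝ) < (m:ℝ)+1)]
    exact (div_le_self (abs_nonneg _) (by have := Nat.cast_nonneg (α := ℝ) m; linarith)).trans (hab m)
  -- summable bound
  have hu : Summable (fun n => ‖q n‖ * (ρ':ℝ) ^ n) := q.summable_norm_mul_pow hrad
  set u : ℕ → ℝ := fun n => match n with
    | 0 => 0
    | (m+1) => ‖q m‖ * (ρ':ℝ) ^ m with hudef
  have hus : ∀ m : ℕ, u (m+1) = ‖q m‖ * (ρ':ℝ) ^ m := fun m => rfl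
  have hu' : Summable u := by
    rw [← summable_nat_add_iff 1]
    exact hu.congr fun m => (hus m).symm
  -- g equals its coefficient sum on the ball
  have hgsum : ∀ y : ℝ, |y| < ρ' → HasSum (fun n => a n * y ^ n) (g y) := by
    intro y hy
    have hmem : y ∈ EMetric.ball (0:ℝ) ρ := by
      refine lt_of_lt_of_le ?_ hρ'.le
      rw [edist_zero_right]
      have h : ‖y‖₊ < ρ' := by
        rw [← NNReal.coe_lt_coe]
        simpa [coe_nnnorm, Real.norm_eq_abs] using hy
      exact_mod_cast h
    have := hq.hasSum (y := y) (by have h : edist y 0 < ρ := hmem; rwa [edist_zero_right] at h)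
    simpa [FormalMultilinearSeries.apply_eq_pow_smul_coeff, smul_eq_mul, mul_comm] using this
  set Q := FormalMultilinearSeries.ofScalars ℝ b with hQ
  set F : ℝ → ℝ := fun z => ∑' n, b n * z ^ n with hF
  have hQnorm : ∀ n, ‖Q n‖ = |b n| := fun n => by
    rw [hQ, FormalMultilinearSeries.ofScalars_norm, Real.norm_eq_abs]
  -- radius of Q positive
  obtain ⟨C, hC0, hCb⟩ := q.norm_mul_pow_le_of_lt_radius hrad
  have hQrad : (ρ' : ENNReal) ≤ Q.radius := by
    apply Q.le_radius_of_bound ((ρ':ℝ) * C)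
    intro n
    rw [hQnorm]
    match n with
    | 0 => rw [hb0]; simp; positivity
    | (m+1) =>
      calc |b (m+1)| * (ρ':ℝ) ^ (m+1) = (|b (m+1)| * (ρ':ℝ)^m) * ρ' := by ring
        _ ≤ (‖q m‖ * (ρ':ℝ)^m) * ρ' :=
            mul_le_mul_of_nonneg_right (mul_le_mul_of_nonneg_right (hbq m) (by positivity)) ρ'.coe_nonneg
        _ ≤ C * ρ' := mul_le_mul_of_nonneg_right (hCb m) ρ'.coe_nonneg
        _ = (ρ':ℝ) * C := by ring
  have hQpos : 0 < Q.radius := lt_of_lt_of_le (by exact_mod_cast hρ'0) hQrad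
  -- F is analytic at 0
  have hFan : AnalyticAt ℝ F 0 := by
    have := (Q.hasFPowerSeriesOnBall hQpos).analyticAt
    apply this.congr
    filter_upwards with z
    rw [hF]
    simp only [FormalMultilinearSeries.sum]
    exact tsum_congr fun n => by
      rw [FormalMultilinearSeries.ofScalars_apply_eq]; simp [smul_eq_mul, mul_comm]
    -- derivative of F on the ball
  have hball : ∀ y : ℝ, |y| < (ρ':ℝ) → y ∈ EMetric.ball (0:ℝ) ρ := by
    intro y hy
    refine lt_of_lt_of_le ?_ hρ'.le
    rw [edist_zero_right]
    have h : ‖y‖₊ < ρ' := by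
      rw [← NNReal.coe_lt_coe]
      simpa [coe_nnnorm, Real.norm_eq_abs] using hy
    exact_mod_cast h
  have hFderiv : ∀ y : ℝ, |y| < (ρ':ℝ) → HasDerivAt F (g y) y := by
    intro y hy
    have hyt : y ∈ Metric.ball (0:ℝ) (ρ':ℝ) := by simpa [Real.dist_eq] using hy
    have h0t : (0:ℝ) ∈ Metric.ball (0:ℝ) (ρ':ℝ) := by
      simp only [Metric.mem_ball, dist_self]
      exact_mod_cast hρ'0
    have hbound : ∀ (n : ℕ) (z : ℝ), z ∈ Metric.ball (0:ℝ) (ρ':ℝ) →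
        ‖b n * ((n:ℝ) * z ^ (n-1))‖ ≤ u n := by
      intro n z hz
      have hzρ : |z| ≤ (ρ':ℝ) := by
        have : |z| < (ρ':ℝ) := by simpa [Real.dist_eq] using hz
        exact this.le
      match n with
      | 0 => simp [hb0]; exact le_refl (0:ℝ)
      | (m+1) =>
        rw [hus, hbs, Real.norm_eq_abs, Nat.add_sub_cancel]
        have hne : ((m:ℝ)+1) ≠ 0 := by positivity
        have habs2 : |a m / ((m:ℝ)+1) * (((m+1:ℕ):ℝ) * z ^ m)| = |a m| * |z| ^ m := by
          push_cast
          rw [abs_mul, abs_mul, abs_div, abs_of_pos (by positivity : (0:ℝ) < (m:ℝ)+1), abs_pow]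
          field_simp
        rw [habs2]
        exact mul_le_mul (hab m) (pow_le_pow_left₀ (abs_nonneg _) hzρ m) (by positivity)
          (norm_nonneg _)
    have hsum0 : Summable (fun n => b n * (0:ℝ) ^ n) := by
      apply summable_zero.congr
      intro n
      cases n <;> simp [hb0]
    have key := hasDerivAt_tsum_of_isPreconnected (u := u)
      (g := fun n z => b n * z ^ n) (g' := fun n z => b n * ((n:ℝ) * z ^ (n-1)))
      hu' Metric.isOpen_ball (convex_ball (0:ℝ) (ρ':ℝ)).isPreconnected
      (fun n z _ => (hasDerivAt_pow n z).const_mul (b n)) hbound h0t hsum0 hyt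
    have hsum : HasSum (fun n => b n * ((n:ℝ) * y ^ (n-1))) (g y) := by
      set f : ℕ → ℝ := fun n => b n * ((n:ℝ) * y ^ (n-1)) with hf
      have heq : (fun m : ℕ => f (m+1)) = fun m => a m * y ^ m := by
        funext m
        rw [hf]
        simp only [hbs, Nat.add_sub_cancel, Nat.cast_add, Nat.cast_one]
        field_simp
      have h2 : HasSum (fun m : ℕ => f (m+1)) (g y) := heq ▸ hgsum y hy
      have h3 := (hasSum_nat_add_iff (f := f) 1).mp h2
      simpa [hf, hb0] using h3
    rw [hsum.tsum_eq] at key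
    exact key
  -- conclude
  apply hFan.congr
  have hmem : ∀ᶠ x : ℝ in nhds 0, |x| < (ρ':ℝ) := by
    filter_upwards [Metric.ball_mem_nhds (0:ℝ) (by exact_mod_cast hρ'0)] with x hx
    simpa [Real.dist_eq] using hx
  filter_upwards [hmem] with x hx
  have hF0 : F 0 = 0 := by
    rw [hF]
    have : (fun n => b n * (0:ℝ)^n) = fun _ => 0 := funext fun n => by cases n <;> simp [hb0]
    simp only [this, tsum_zero]
  have habs : ∀ t ∈ Set.uIcc (0:ℝ) x, |t| < (ρ':ℝ) := by
    intro t ht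
    rw [Set.mem_uIcc] at ht
    have hx' := abs_lt.mp hx
    rcases ht with ⟨h1, h2⟩ | ⟨h1, h2⟩ <;> rw [abs_lt] <;> constructor <;> linarith [hx'.1, hx'.2]
  have hint : IntervalIntegrable g MeasureTheory.volume 0 x := by
    apply ContinuousOn.intervalIntegrable
    apply hq.continuousOn.mono
    intro t ht
    exact hball t (habs t ht)
  have := intervalIntegral.integral_eq_sub_of_hasDerivAt
    (fun t ht => hFderiv t (habs t ht)) hint
  rw [this, hF0, sub_zero]

/-- For an integer `p ≥ 2`, the function `arcsin_p(x) = ∫_0^x (1-t^p)^(-(p-1)/p) dt`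
is analytic at `x = 0`. -/
theorem arcsinp_analyticAt (p : ℕ) (hp : 2 ≤ p) :
    AnalyticAt ℝ
      (fun x : ℝ => ∫ t in (0 : ℝ)..x, (1 - t ^ p) ^ (-(((p : ℝ) - 1) / p))) 0 :=
  analyticAt_primitive (arcsinp_integrand_analyticAt p hp)
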